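/- Let n ≥ 3, K a field, p ∈ K invertible with q := p² and q² ≠ 1. Let A be a unital associative K-algebra containing elements e_i, f_i and invertible t_i (1 ≤ i ≤ n−1) satisfying the defining relations of U_q(B_{n−1}), where B_{n−1} has Cartan data a_{ii} = 2, a_{12} = −2, a_{21} = −1, a_{i,i+1} = a_{i+1,i} = −1 for 2 ≤ i ≤ n−2, all other entries 0, d_1 = 1/2 (with q^{1/2} read as p) and d_i = 1 for i ≥ 2. Fix c ∈ K nonzero and set F_i := f_i, E_i := e_i, T_i := t_i for 1 ≤ i ≤ n−1, E_n := 0 and T_n := c·t_1^{−1} t_2^{−1} ⋯ t_{n−1}^{−1}. Then these elements satisfy every defining relation of U_q(B_n) involving only F_1,…,F_{n−1}, E_1,…,E_n, T_1^{±1},…,T_n^{±1} (where B_n extends B_{n−1} by a_{n,n−1} = a_{n−1,n} = −1, a_{nj} = a_{jn} = 0 for j ≤ n−2, a_{nn} = 2, d_n = 1); in particular T_n is invertible, commutes with every T_i, and T_n E_j = q^{a_{nj}} E_j T_n, T_n F_j = q^{−a_{nj}} F_j T_n for 1 ≤ j ≤ n−1. -/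

import Mathlib

open scoped BigOperators

noncomputable section

variable {K : Type*} [Field K] {A : Type*} [Ring A] [Algebra K A]

/-- The `t`-integer `[m]_t = (t^m - t^(-m))/(t - t⁻¹)`. -/
def qint (t : K) (m : ℤ) : K := (t ^ m - t ^ (-m)) / (t - t⁻¹)

/-- The `t`-factorial `[m]_t!`. -/
def qfact (t : K) (m : ℕ) : K := ∏ j ∈ Finset.range m, qint t ((j : ℤ) + 1)

/-- The `t`-binomial coefficient `C(m,k)_t`. -/
def qbinom (t : K) (m k : ℕ) : K := qfact t m / (qfact t k * qfact t (m - k))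

/-- The curly bracket `{u}_t = (u - u⁻¹)/(t - t⁻¹)` of a unit `u`. -/
def curly (t : K) (u : Aˣ) : A :=
  algebraMap K A (t - t⁻¹)⁻¹ * ((u : A) - ((u⁻¹ : Aˣ) : A))

/-- The defining relations of the quantum group attached to the Cartan matrix `a`
(with indices `1, …, n` and symmetrizers `d_i` encoded by `q^{d_i} = p^{D i}`),
for elements `e i`, `f i` and units `t i` of an associative `K`-algebra `A`:
commutation of the `t i`, the `t`–`e` and `t`–`f` relations, the
`[e_i, f_j] = δ_{ij} (t_i - t_i⁻¹)/(q^{d_i} - q^{-d_i})` relations and the quantum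
Serre relations among the `e`'s and among the `f`'s.  Relations involving `f j` are
imposed only for indices `j` satisfying `S j`; taking `S := fun _ => True` gives the
full set of defining relations, while e.g. `S := fun j => j ≠ n` gives exactly those
defining relations which involve only the generators
`e_1, …, e_n`, `t_1^{±1}, …, t_n^{±1}` and `f_1, …, f_{n-1}`. -/
def UqRels (p : K) (n : ℕ) (a : ℕ → ℕ → ℤ) (D : ℕ → ℤ)
    (e f : ℕ → A) (t : ℕ → Aˣ) (S : ℕ → Prop) : Prop :=
  (∀ i j, 1 ≤ i → i ≤ n → 1 ≤ j → j ≤ n →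
    (t i : A) * (t j : A) = (t j : A) * (t i : A)) ∧
  (∀ i j, 1 ≤ i → i ≤ n → 1 ≤ j → j ≤ n →
    (t i : A) * e j = algebraMap K A (p ^ (D i * a i j)) * (e j * (t i : A))) ∧
  (∀ i j, 1 ≤ i → i ≤ n → 1 ≤ j → j ≤ n → S j →
    (t i : A) * f j = algebraMap K A (p ^ (-(D i * a i j))) * (f j * (t i : A))) ∧
  (∀ i, 1 ≤ i → i ≤ n → S i →
    e i * f i - f i * e i
      = algebraMap K A ((p ^ D i - p ^ (-D i))⁻¹) * ((t i : A) - (((t i)⁻¹ : Aˣ) : A))) ∧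
  (∀ i j, 1 ≤ i → i ≤ n → 1 ≤ j → j ≤ n → S j → i ≠ j → e i * f j = f j * e i) ∧
  (∀ i j, 1 ≤ i → i ≤ n → 1 ≤ j → j ≤ n → i ≠ j →
    ∑ v ∈ Finset.range ((1 - a i j).toNat + 1),
      algebraMap K A ((-1 : K) ^ v * qbinom (p ^ D i) (1 - a i j).toNat v) *
        (e i ^ ((1 - a i j).toNat - v) * e j * e i ^ v) = 0) ∧
  (∀ i j, 1 ≤ i → i ≤ n → 1 ≤ j → j ≤ n → S i → S j → i ≠ j →
    ∑ v ∈ Finset.range ((1 - a i j).toNat + 1),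
      algebraMap K A ((-1 : K) ^ v * qbinom (p ^ D i) (1 - a i j).toNat v) *
        (f i ^ ((1 - a i j).toNat - v) * f j * f i ^ v) = 0)

/-- A family of units extended by `1` outside the index range `[lo, hi]`
(the convention `z_k = 1` for an out-of-range index `k`). -/
def ubz (lo hi : ℕ) (z : ℕ → Aˣ) (k : ℕ) : Aˣ := if lo ≤ k ∧ k ≤ hi then z k else 1

/-- Underlying elements of a family of units, extended by `1` outside `[lo, hi]`. -/
def ubx (lo hi : ℕ) (x : ℕ → Aˣ) (k : ℕ) : A := if lo ≤ k ∧ k ≤ hi then (x k : A) else 1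

/-- Inverses of a family of units, extended by `0` outside `[lo, hi]`
(the convention `x_k⁻¹ = 0` for an out-of-range index `k`). -/
def ubxi (lo hi : ℕ) (x : ℕ → Aˣ) (k : ℕ) : A :=
  if lo ≤ k ∧ k ≤ hi then (((x k)⁻¹ : Aˣ) : A) else 0

/-- A family of algebra elements extended by `0` outside `[lo, hi]`
(the conventions `F_0 = 0`, `F_n = 0`). -/
def ubf (lo hi : ℕ) (F : ℕ → A) (k : ℕ) : A := if lo ≤ k ∧ k ≤ hi then F k else 0

/-- The Cartan matrix of type `B_n` (`a_{12} = -2`, `a_{21} = -1`, chain otherwise);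
its upper-left `(n-1) × (n-1)` block is the Cartan matrix of `B_{n-1}`. -/
def cartanB (i j : ℕ) : ℤ :=
  if i = j then 2 else if i = 1 ∧ j = 2 then -2
  else if i + 1 = j ∨ j + 1 = i then -1 else 0

/-- Symmetrizers of `B_n`: `d_1 = 1/2`, `d_i = 1` otherwise, encoded through
`q^{d_i} = p^{dB i}` for `q = p²`. -/
def dB : ℕ → ℤ := fun i => if i = 1 then 1 else 2


section AuxBarUq

variable {K : Type*} [Field K] {A : Type*} [Ring A] [Algebra K A]

/-- Auxiliary semicommutation predicate: `x * y = s • (y * x)`. -/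
def mySC (s : K) (x y : A) : Prop := x * y = s • (y * x)

theorem mySC.to_eq {s : K} {x y : A} (h : mySC s x y) :
    x * y = algebraMap K A s * (y * x) := by
  rw [h, Algebra.smul_def]

theorem mySC.of_eq {s : K} {x y : A} (h : x * y = algebraMap K A s * (y * x)) :
    mySC s x y := by
  show x * y = s • (y * x)
  rw [Algebra.smul_def]; exact h

theorem mySC.mul_left {s s' : K} {x x' y : A} (h : mySC s x y) (h' : mySC s' x' y) :
    mySC (s * s') (x * x') y := by
  show x * x' * y = (s * s') • (y * (x * x'))
  calc x * x' * y = x * (x' * y) := by rw [mul_assoc]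
    _ = x * (s' • (y * x')) := by rw [h']
    _ = s' • (x * y * x') := by rw [mul_smul_comm, mul_assoc]
    _ = s' • ((s • (y * x)) * x') := by rw [h]
    _ = (s * s') • (y * (x * x')) := by
        rw [smul_mul_assoc, smul_smul, mul_comm s' s, mul_assoc]

theorem mySC.one_one (y : A) : mySC (1 : K) 1 y := by
  show (1 : A) * y = (1 : K) • (y * 1)
  simp

theorem mySC.algebraMap' (s : K) (y : A) : mySC (1 : K) (algebraMap K A s) y := by
  show algebraMap K A s * y = (1 : K) • (y * algebraMap K A s)
  simp [Algebra.commutes]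

theorem mySC.unit_inv {s : K} (hs : s ≠ 0) {u : Aˣ} {y : A} (h : mySC s (u : A) y) :
    mySC s⁻¹ ((u⁻¹ : Aˣ) : A) y := by
  have h' : (u : A) * y = s • (y * (u : A)) := h
  have h2 : y * ((u⁻¹ : Aˣ) : A) = s • (((u⁻¹ : Aˣ) : A) * y) := by
    calc y * ((u⁻¹ : Aˣ) : A)
        = ((u⁻¹ : Aˣ) : A) * ((u : A) * y) * ((u⁻¹ : Aˣ) : A) := by
          rw [← mul_assoc, Units.inv_mul, one_mul]
      _ = ((u⁻¹ : Aˣ) : A) * (s • (y * (u : A))) * ((u⁻¹ : Aˣ) : A) := by rw [h']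
      _ = s • (((u⁻¹ : Aˣ) : A) * y) := by
          rw [mul_smul_comm, smul_mul_assoc, mul_assoc, mul_assoc, Units.mul_inv, mul_one]
  show ((u⁻¹ : Aˣ) : A) * y = s⁻¹ • (y * ((u⁻¹ : Aˣ) : A))
  rw [h2, smul_smul, inv_mul_cancel₀ hs, one_smul]

theorem mySC.list_prod (m : ℕ) (p : K) (hp : p ≠ 0) (x : ℕ → Aˣ) (y : A) (g : ℕ → ℤ)
    (h : ∀ k, k < m → mySC (p ^ (g k)) ((x k : Aˣ) : A) y) :
    mySC (p ^ (∑ k ∈ Finset.range m, g k)) ((((List.range m).map x).prod : Aˣ) : A) y := by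
  induction m with
  | zero => simpa using mySC.one_one y
  | succ m ih =>
    rw [Finset.sum_range_succ, List.range_succ, List.map_append, List.prod_append,
      zpow_add₀ hp]
    simp only [List.map_cons, List.map_nil, List.prod_cons, List.prod_nil, mul_one,
      Units.val_mul]
    exact (ih (fun k hk => h k (by omega))).mul_left (h m (by omega))

theorem Tn_mySC (m : ℕ) (p : K) (hp : p ≠ 0) (t : ℕ → Aˣ) (y : A) (g : ℕ → ℤ)
    (c : K) (hc : c ≠ 0)
    (h : ∀ k, 1 ≤ k → k ≤ m → mySC (p ^ g k) ((t k : Aˣ) : A) y) :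
    mySC (p ^ (-(∑ k ∈ Finset.range m, g (k + 1))))
      (((Units.map (algebraMap K A).toMonoidHom (Units.mk0 c hc) *
        ((List.range m).map fun k => (t (k + 1))⁻¹).prod : Aˣ) : A)) y := by
  have h1 : ∀ k, k < m →
      mySC (p ^ (-(g (k + 1)))) (((fun k => (t (k + 1))⁻¹) k : Aˣ) : A) y := by
    intro k hk
    have h2 := (h (k + 1) (by omega) (by omega)).unit_inv (zpow_ne_zero _ hp)
    rwa [← zpow_neg] at h2
  have h2 := mySC.list_prod m p hp (fun k => (t (k + 1))⁻¹) y (fun k => -(g (k + 1))) h1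
  have h3 := (mySC.algebraMap' (A := A) c y).mul_left h2
  rw [one_mul] at h3
  have hs : ∑ k ∈ Finset.range m, -(g (k + 1)) = -(∑ k ∈ Finset.range m, g (k + 1)) := by
    rw [Finset.sum_neg_distrib]
  rw [hs] at h3
  convert h3 using 2
  rw [Units.val_mul]; rfl

theorem cartanB_offdiag_nonpos {i j : ℕ} (h : i ≠ j) : cartanB i j ≤ 0 := by
  unfold cartanB; split_ifs <;> omega

theorem dB_cartanB_sum : ∀ m, ∀ j, 1 ≤ j →
    (j ≤ m → ∑ k ∈ Finset.range m, dB (k + 1) * cartanB (k + 1) j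
      = if j = m then 2 else 0) ∧
    (1 ≤ m → j = m + 1 →
      ∑ k ∈ Finset.range m, dB (k + 1) * cartanB (k + 1) j = -2) := by
  intro m
  induction m with
  | zero => intro j hj; exact ⟨by omega, by omega⟩
  | succ m ih =>
    intro j hj
    constructor
    · intro hjm
      rw [Finset.sum_range_succ]
      rcases Nat.lt_or_ge j (m + 1) with hlt | hge
      · have hIH := (ih j hj).1 (by omega)
        rw [hIH]
        have hrow : dB (m + 1) * cartanB (m + 1) j = if j = m then -2 else 0 := by
          unfold cartanB dB; split_ifs <;> omega
        rw [hrow]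
        by_cases hjm' : j = m <;> simp [hjm'] <;> omega
      · have hj' : j = m + 1 := by omega
        subst hj'
        have hrow : dB (m + 1) * cartanB (m + 1) (m + 1) = if m = 0 then 2 else 4 := by
          unfold cartanB dB; split_ifs <;> omega
        rcases Nat.eq_zero_or_pos m with hm0 | hm0
        · subst hm0; simp at hrow ⊢; omega
        · have hIH := (ih (m + 1) (by omega)).2 hm0 rfl
          rw [hIH, hrow]
          simp; omega
    · intro _ hj'
      subst hj'
      rw [Finset.sum_range_succ]
      have h0 : ∑ k ∈ Finset.range m, dB (k + 1) * cartanB (k + 1) (m + 1 + 1) = 0 := by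
        apply Finset.sum_eq_zero
        intro k hk
        have hk' : k < m := Finset.mem_range.mp hk
        have hz : cartanB (k + 1) (m + 1 + 1) = 0 := by
          unfold cartanB; split_ifs <;> omega
        rw [hz, mul_zero]
      rw [h0, zero_add]
      unfold cartanB dB; split_ifs <;> omega

end AuxBarUq

/-- Lemma 1, `B` case: given a representation of `U_q(B_{n-1})` (`q = p²`), the
elements `F_i := f_i`, `E_i := e_i`, `T_i := t_i` (`i ≤ n-1`), `E_n := 0` and
`T_n := c·t_1⁻¹⋯t_{n-1}⁻¹` satisfy all defining relations of `U_q(B_n)` not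
involving `f_n`. -/
theorem barUqBn_from_UqBnm1
    (n : ℕ) (hn : 3 ≤ n) (p : K) (hp : p ≠ 0) (hq2 : (p ^ 2) ^ 2 ≠ 1)
    (e f : ℕ → A) (t : ℕ → Aˣ)
    (hrel : UqRels p (n - 1) cartanB dB e f t (fun _ => True))
    (c : K) (hc : c ≠ 0) :
    UqRels p n cartanB dB
      (fun i => if i = n then 0 else e i) f
      (fun i => if i = n then
          Units.map (algebraMap K A).toMonoidHom (Units.mk0 c hc) *
            ((List.range (n - 1)).map fun k => (t (k + 1))⁻¹).prod
        else t i)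
      (fun j => j ≠ n) := by
  obtain ⟨htt, hte, htf, hef, hef', hse, hsf⟩ := hrel
  have hsum : ∀ j, 1 ≤ j → j ≤ n - 1 →
      ∑ k ∈ Finset.range (n - 1), dB (k + 1) * cartanB (k + 1) j
        = -(dB n * cartanB n j) := by
    intro j hj1 hj2
    have h1 := (dB_cartanB_sum (n - 1) j hj1).1 hj2
    have h2 : dB n * cartanB n j = if j = n - 1 then -2 else 0 := by
      unfold cartanB dB; split_ifs <;> omega
    rw [h1, h2]
    by_cases hj : j = n - 1 <;> simp [hj]
  have hTt : ∀ j, 1 ≤ j → j ≤ n - 1 →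
      ((Units.map (algebraMap K A).toMonoidHom (Units.mk0 c hc) *
        ((List.range (n - 1)).map fun k => (t (k + 1))⁻¹).prod : Aˣ) : A) * (t j : A)
        = (t j : A) *
          ((Units.map (algebraMap K A).toMonoidHom (Units.mk0 c hc) *
            ((List.range (n - 1)).map fun k => (t (k + 1))⁻¹).prod : Aˣ) : A) := by
    intro j hj1 hj2
    have h0 : ∀ k, 1 ≤ k → k ≤ n - 1 →
        mySC ((p : K) ^ (0 : ℤ)) ((t k : Aˣ) : A) ((t j : A)) := by
      intro k hk1 hk2
      show (t k : A) * (t j : A) = ((p : K) ^ (0 : ℤ)) • ((t j : A) * (t k : A))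
      rw [htt k j hk1 hk2 hj1 hj2]
      simp
    have h1 := (Tn_mySC (n - 1) p hp t ((t j : A)) (fun _ => (0 : ℤ)) c hc h0).to_eq
    simp only [Finset.sum_const_zero, neg_zero, zpow_zero, map_one, one_mul] at h1
    exact h1
  refine ⟨?_, ?_, ?_, ?_, ?_, ?_, ?_⟩
  · -- t-t commutation
    intro i j hi1 hi2 hj1 hj2
    by_cases hi : i = n
    · by_cases hj : j = n
      · simp only [hi, hj, if_pos rfl]
      · simp only [hi, if_pos rfl, if_neg hj]
        exact hTt j hj1 (by omega)
    · by_cases hj : j = n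
      · simp only [hj, if_pos rfl, if_neg hi]
        exact (hTt i hi1 (by omega)).symm
      · simp only [if_neg hi, if_neg hj]
        exact htt i j hi1 (by omega) hj1 (by omega)
  · -- t-e relations
    intro i j hi1 hi2 hj1 hj2
    by_cases hj : j = n
    · simp only [hj, if_pos rfl]
      simp
    · have hj2' : j ≤ n - 1 := by omega
      by_cases hi : i = n
      · have h0 : ∀ k, 1 ≤ k → k ≤ n - 1 →
            mySC (p ^ (dB k * cartanB k j)) ((t k : Aˣ) : A) (e j) :=
          fun k hk1 hk2 => mySC.of_eq (hte k j hk1 hk2 hj1 hj2')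
        have h1 := Tn_mySC (n - 1) p hp t (e j) (fun k => dB k * cartanB k j) c hc h0
        rw [hsum j hj1 hj2', neg_neg] at h1
        simp only [hi, if_pos rfl, if_neg hj]
        exact h1.to_eq
      · simp only [if_neg hi, if_neg hj]
        exact hte i j hi1 (by omega) hj1 hj2'
  · -- t-f relations
    intro i j hi1 hi2 hj1 hj2 hSj
    have hj : j ≠ n := hSj
    have hj2' : j ≤ n - 1 := by omega
    by_cases hi : i = n
    · have h0 : ∀ k, 1 ≤ k → k ≤ n - 1 →
          mySC (p ^ (-(dB k * cartanB k j))) ((t k : Aˣ) : A) (f j) :=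
        fun k hk1 hk2 => mySC.of_eq (htf k j hk1 hk2 hj1 hj2' trivial)
      have h1 := Tn_mySC (n - 1) p hp t (f j) (fun k => -(dB k * cartanB k j)) c hc h0
      have hs2 : -(∑ k ∈ Finset.range (n - 1), -(dB (k + 1) * cartanB (k + 1) j))
          = -(dB n * cartanB n j) := by
        rw [Finset.sum_neg_distrib, neg_neg]; exact hsum j hj1 hj2'
      rw [hs2] at h1
      simp only [hi, if_pos rfl]
      exact h1.to_eq
    · simp only [if_neg hi]
      exact htf i j hi1 (by omega) hj1 hj2' trivial
  · -- e-f commutator, i = j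
    intro i hi1 hi2 hSi
    have hi : i ≠ n := hSi
    simp only [if_neg hi]
    exact hef i hi1 (by omega) trivial
  · -- e-f commutation, i ≠ j
    intro i j hi1 hi2 hj1 hj2 hSj hij
    by_cases hi : i = n
    · simp only [hi, if_pos rfl]
      simp
    · simp only [if_neg hi]
      exact hef' i j hi1 (by omega) hj1 (by omega) trivial hij
  · -- Serre relations among e's
    intro i j hi1 hi2 hj1 hj2 hij
    by_cases hj : j = n
    · simp only [hj, if_pos rfl]
      apply Finset.sum_eq_zero
      intro v hv
      simp
    · by_cases hi : i = n
      · have hij' : n ≠ j := by omega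
        have hle : cartanB n j ≤ 0 := cartanB_offdiag_nonpos hij'
        have hm : 1 ≤ (1 - cartanB n j).toNat := by omega
        simp only [hi, eq_self_iff_true, if_true, if_neg hj]
        apply Finset.sum_eq_zero
        intro v hv
        by_cases hv0 : v = 0
        · subst hv0
          rw [Nat.sub_zero, zero_pow (by omega : (1 - cartanB n j).toNat ≠ 0)]
          simp
        · rw [zero_pow hv0]
          simp

      · simp only [if_neg hi, if_neg hj]
        exact hse i j hi1 (by omega) hj1 (by omega) hij
  · -- Serre relations among f's
    intro i j hi1 hi2 hj1 hj2 hSi hSj hij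
    exact hsf i j hi1 (by omega) hj1 (by omega) trivial trivial hij
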